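/- For any matrix M and a real quadratic ax² + bx + c = Tr[M*M] ≥ 0 for all real x with a ≥ 0, one has b² ≤ 4ac; applied with M = i[(ρ^α+ρ^{1−α})/2, X₀]·x + {(ρ^α+ρ^{1−α})/2, Y₀}, this yields |Tr[(ρ^α+ρ^{1−α})²(i[X,Y])]|² ≤ 4·(2K_{ρ,α}(X) + I-terms)·(2L_{ρ,α}(Y) + J-terms); in particular the discriminant inequality: |Tr[(ρ^α+ρ^{1−α})²[X,Y]]|² ≤ 16 K'_{ρ,α}(X) L'_{ρ,α}(Y) where K'_{ρ,α}(X) = (1/4)Tr[(i[ρ^α,X₀])² + (i[ρ^{1−α},X₀])²] + I_{ρ,α}(X) and L'_{ρ,α}(Y) = (1/4)Tr[{ρ^α,Y₀}² + {ρ^{1−α},Y₀}²] + J_{ρ,α}(Y). -/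

import Mathlib

open Matrix ComplexOrder

/-- The real power of a positive semidefinite matrix, defined via the
continuous functional calculus (spectral decomposition). -/
noncomputable def mpow {n : Type*} [Fintype n] [DecidableEq n]
    (ρ : Matrix n n ℂ) (hρ : ρ.PosSemidef) (α : ℝ) : Matrix n n ℂ :=
  hρ.1.cfc (fun x : ℝ => x ^ α)

lemma trace_cs {n : Type*} [Fintype n] [DecidableEq n]
    (P Q : Matrix n n ℂ) (hP : P.IsHermitian) (hQ : Q.IsHermitian) :
    ‖(P * Q).trace‖ ^ 2 ≤ ((P * P).trace).re * ((Q * Q).trace).re := by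
  classical
  let emb : Matrix n n ℂ → EuclideanSpace ℂ (n × n) := fun M => WithLp.toLp 2 (fun ij : n × n => M ij.2 ij.1)
  have key : ∀ (M N : Matrix n n ℂ), M.IsHermitian →
      (M * N).trace = @inner ℂ (EuclideanSpace ℂ (n × n)) _ (emb M) (emb N) := by
    intro M N hM
    rw [PiLp.inner_apply]
    simp only [Matrix.trace, Matrix.diag, Matrix.mul_apply, RCLike.inner_apply, emb, PiLp.toLp_apply]
    rw [Finset.sum_comm, ← Finset.sum_product', Finset.univ_product_univ]
    apply Fintype.sum_equiv (Equiv.prodComm n n)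
    intro ij
    simp only [Equiv.prodComm_apply, Prod.fst_swap, Prod.snd_swap]
    rw [show (starRingEnd ℂ) (M ij.1 ij.2) = M ij.2 ij.1 from hM.apply ij.2 ij.1]
    exact mul_comm _ _
  rw [key P Q hP, key P P hP, key Q Q hQ]
  have hp : (@inner ℂ (EuclideanSpace ℂ (n × n)) _ (emb P) (emb P)).re = ‖emb P‖ ^ 2 :=
    by rw [← RCLike.re_to_complex]; exact inner_self_eq_norm_sq _
  have hq : (@inner ℂ (EuclideanSpace ℂ (n × n)) _ (emb Q) (emb Q)).re = ‖emb Q‖ ^ 2 :=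
    by rw [← RCLike.re_to_complex]; exact inner_self_eq_norm_sq _
  rw [hp, hq]
  calc ‖(@inner ℂ (EuclideanSpace ℂ (n × n)) _ (emb P) (emb Q))‖ ^ 2
      = ‖@inner ℂ (EuclideanSpace ℂ (n × n)) _ (emb P) (emb Q)‖ ^ 2 := rfl
    _ ≤ (‖emb P‖ * ‖emb Q‖) ^ 2 := by
        apply pow_le_pow_left₀ (norm_nonneg _) (norm_inner_le_norm _ _)
    _ = ‖emb P‖ ^ 2 * ‖emb Q‖ ^ 2 := by ring

lemma herm_conj {n : Type*} [Fintype n] [DecidableEq n]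
    (u d : Matrix n n ℂ) (hd : d.IsHermitian) : (u * d * star u).IsHermitian := by
  rw [star_eq_conjTranspose]
  exact isHermitian_mul_mul_conjTranspose u hd

lemma mpow_isHermitian {n : Type*} [Fintype n] [DecidableEq n]
    (ρ : Matrix n n ℂ) (hρ : ρ.PosSemidef) (α : ℝ) :
    (mpow ρ hρ α).IsHermitian := by
  have hs : star (RCLike.ofReal ∘ (fun x : ℝ => x ^ α) ∘ hρ.1.eigenvalues :
      n → ℂ) = RCLike.ofReal ∘ (fun x : ℝ => x ^ α) ∘ hρ.1.eigenvalues := by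
    funext i
    simp [Pi.star_def, Complex.conj_ofReal]
  have hd : (diagonal (RCLike.ofReal ∘ (fun x : ℝ => x ^ α) ∘ hρ.1.eigenvalues) :
      Matrix n n ℂ).IsHermitian := by
    rw [Matrix.IsHermitian, diagonal_conjTranspose, hs]
  exact herm_conj _ _ hd

theorem stmt7 {n : Type*} [Fintype n] [DecidableEq n]
    (ρ : Matrix n n ℂ) (hρ : ρ.PosSemidef) (htr : ρ.trace = 1)
    (X Y : Matrix n n ℂ) (hX : X.IsHermitian) (hY : Y.IsHermitian)
    (α : ℝ) (hα : α ∈ Set.Icc (0:ℝ) 1) :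
    let X₀ := X - (ρ * X).trace • (1 : Matrix n n ℂ)
    let Y₀ := Y - (ρ * Y).trace • (1 : Matrix n n ℂ)
    let A := mpow ρ hρ α
    let B := mpow ρ hρ (1-α)
    let Iα : ℝ := ((1/2 : ℂ) * ((Complex.I • (A * X₀ - X₀ * A)) *
        (Complex.I • (B * X₀ - X₀ * B))).trace).re
    let Jα : ℝ := ((1/2 : ℂ) * ((A * Y₀ + Y₀ * A) * (B * Y₀ + Y₀ * B)).trace).re
    let K' : ℝ := ((1/4 : ℂ) * ((Complex.I • (A * X₀ - X₀ * A)) ^ 2 +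
        (Complex.I • (B * X₀ - X₀ * B)) ^ 2).trace).re + Iα
    let L' : ℝ := ((1/4 : ℂ) * ((A * Y₀ + Y₀ * A) ^ 2 +
        (B * Y₀ + Y₀ * B) ^ 2).trace).re + Jα
    ‖((A + B) ^ 2 * (X * Y - Y * X)).trace‖ ^ 2 ≤ 16 * K' * L' := by
  intro X₀ Y₀ A B Iα Jα K' L'
  have hX₀def : X₀ = X - (ρ * X).trace • (1 : Matrix n n ℂ) := rfl
  have hY₀def : Y₀ = Y - (ρ * Y).trace • (1 : Matrix n n ℂ) := rfl
  have hA : A.IsHermitian := mpow_isHermitian ρ hρ α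
  have hB : B.IsHermitian := mpow_isHermitian ρ hρ (1-α)
  -- real-valuedness of Tr[ρ M] for Hermitian M
  have hreal : ∀ (M : Matrix n n ℂ), M.IsHermitian → star ((ρ * M).trace) = (ρ * M).trace := by
    intro M hM
    rw [← Matrix.trace_conjTranspose, conjTranspose_mul, hM, hρ.1, trace_mul_comm]
  have hX₀ : X₀.IsHermitian := by
    rw [Matrix.IsHermitian, hX₀def, conjTranspose_sub, hX, conjTranspose_smul,
      conjTranspose_one, hreal X hX]
  have hY₀ : Y₀.IsHermitian := by
    rw [Matrix.IsHermitian, hY₀def, conjTranspose_sub, hY, conjTranspose_smul,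
      conjTranspose_one, hreal Y hY]
  set C := A + B with hCdef
  have hC : C.IsHermitian := hA.add hB
  set P := Complex.I • (C * X₀ - X₀ * C) with hPdef
  set Q := C * Y₀ + Y₀ * C with hQdef
  have hP : P.IsHermitian := by
    rw [Matrix.IsHermitian, hPdef, conjTranspose_smul, conjTranspose_sub,
      conjTranspose_mul, conjTranspose_mul, hC, hX₀]
    simp only [Complex.star_def, Complex.conj_I, neg_smul, ← smul_neg, neg_sub]
  have hQ : Q.IsHermitian := by
    rw [Matrix.IsHermitian, hQdef, conjTranspose_add, conjTranspose_mul,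
      conjTranspose_mul, hC, hY₀]
    exact add_comm _ _
  -- trace of P*Q equals I * trace(C*C*(X*Y - Y*X))
  have comm_eq : X₀ * Y₀ - Y₀ * X₀ = X * Y - Y * X := by
    rw [hX₀def, hY₀def]
    simp only [sub_mul, mul_sub, smul_mul_assoc, mul_smul_comm, Matrix.one_mul,
      Matrix.mul_one, smul_smul]
    module
  have t1 : (C*X₀*C*Y₀).trace = (X₀*C*Y₀*C).trace := by
    rw [show C*X₀*C*Y₀ = C*(X₀*C*Y₀) by noncomm_ring, trace_mul_comm]
  have t2 : (C*X₀*Y₀*C).trace = (C*C*X₀*Y₀).trace := by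
    rw [trace_mul_comm, show C*(C*X₀*Y₀) = C*C*X₀*Y₀ by noncomm_ring]
  have t3 : (X₀*C*C*Y₀).trace = (C*C*Y₀*X₀).trace := by
    rw [show X₀*C*C*Y₀ = X₀*(C*C*Y₀) by noncomm_ring, trace_mul_comm]
  have e1 : ((C*X₀ - X₀*C) * (C*Y₀ + Y₀*C)).trace = (C*C*(X*Y - Y*X)).trace := by
    rw [show (C*X₀ - X₀*C) * (C*Y₀ + Y₀*C)
        = C*X₀*C*Y₀ + C*X₀*Y₀*C - X₀*C*C*Y₀ - X₀*C*Y₀*C by noncomm_ring,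
      show C*C*(X*Y - Y*X) = C*C*(X₀*Y₀ - Y₀*X₀) by rw [comm_eq],
      show C*C*(X₀*Y₀ - Y₀*X₀) = C*C*X₀*Y₀ - C*C*Y₀*X₀ by noncomm_ring]
    simp only [trace_sub, trace_add]
    rw [t1, t2, t3]
    ring
  have hPQ : (P * Q).trace = Complex.I * ((C*C*(X*Y - Y*X)).trace) := by
    rw [hPdef, smul_mul_assoc, trace_smul, e1, smul_eq_mul]
  -- 4 * K' = Re Tr[P*P]
  have quarter_re : ∀ z : ℂ, ((1/4 : ℂ) * z).re = z.re / 4 := by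
    intro z; simp [Complex.mul_re]; ring
  have half_re : ∀ z : ℂ, ((1/2 : ℂ) * z).re = z.re / 2 := by
    intro z; simp [Complex.mul_re]; ring
  have two_re' : ∀ z : ℂ, ((2 : ℂ) * z).re = 2 * z.re := by
    intro z; simp [Complex.mul_re]
  have split2 : ∀ S T : Matrix n n ℂ, ((S + T) * (S + T)).trace
      = (S^2 + T^2).trace + 2 * (S * T).trace := by
    intro S T
    rw [show (S + T) * (S + T) = S^2 + T^2 + (S*T + T*S) by noncomm_ring]
    simp only [trace_add]
    rw [trace_mul_comm T S]
    ring
  have hPsum : P = (Complex.I • (A * X₀ - X₀ * A)) + (Complex.I • (B * X₀ - X₀ * B)) := by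
    rw [hPdef, hCdef, show (A+B) * X₀ - X₀ * (A+B)
      = (A * X₀ - X₀ * A) + (B * X₀ - X₀ * B) by noncomm_ring, smul_add]
  have hQsum : Q = (A * Y₀ + Y₀ * A) + (B * Y₀ + Y₀ * B) := by
    rw [hQdef, hCdef]; noncomm_ring
  have hK : ((P * P).trace).re = 4 * K' := by
    rw [hPsum, split2]
    show _ = 4 * (((1/4 : ℂ) * _).re + ((1/2 : ℂ) * _).re)
    rw [Complex.add_re, quarter_re, half_re, two_re']
    ring
  have hL : ((Q * Q).trace).re = 4 * L' := by
    rw [hQsum, split2]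
    show _ = 4 * (((1/4 : ℂ) * _).re + ((1/2 : ℂ) * _).re)
    rw [Complex.add_re, quarter_re, half_re, two_re']
    ring
  have habs : ‖(C ^ 2 * (X * Y - Y * X)).trace‖
      = ‖(P * Q).trace‖ := by
    rw [hPQ, norm_mul, Complex.norm_I, one_mul, sq]
  rw [show ((A + B) ^ 2 : Matrix n n ℂ) = C ^ 2 from rfl, habs,
    show (16 : ℝ) * K' * L' = (4 * K') * (4 * L') by ring, ← hK, ← hL]
  exact trace_cs P Q hP hQ
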